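/- Assume some subset A ⊆ M admits no e with Sol(e, A), and let λ be the least cardinality of such a subset A. If λ > θ, then λ is a regular cardinal. -/

import Mathlib

universe u

/-- Regularity of the non-transitivity cardinal (Shelah 950, Observation b47(1)):
`Sol` relates witness sets `e ⊆ M` of cardinality `≤ θ` to arbitrary subsets `A ⊆ M`,
is monotone (downward in `A`) and transitive; if some subset admits no witness and
`λ` is the least cardinality of such a subset, then `λ > θ` implies `λ` is regular. -/
theorem stmt_1 {M : Type u} (θ : Cardinal.{u}) (hθ : Cardinal.aleph0 ≤ θ)
    (Sol : Set M → Set M → Prop)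
    (hcard : ∀ e A : Set M, Sol e A → Cardinal.mk ↥e ≤ θ)
    (hmono : ∀ e A B : Set M, Sol e A → B ⊆ A → Sol e B)
    (htrans : ∀ (I : Type u) (eF AF : I → Set M) (e : Set M),
      (∀ i, Sol (eF i) (AF i)) → Sol e (⋃ i, eF i) → Sol e (⋃ i, AF i))
    (lam : Cardinal.{u})
    (hwit : ∃ A : Set M, Cardinal.mk ↥A = lam ∧ ∀ e, ¬ Sol e A)
    (hleast : ∀ A : Set M, (∀ e, ¬ Sol e A) → lam ≤ Cardinal.mk ↥A)
    (hlθ : θ < lam) :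
    lam.IsRegular := by
  have hlam0 : Cardinal.aleph0 ≤ lam := hθ.trans hlθ.le
  have hsmall : ∀ B : Set M, Cardinal.mk ↥B < lam → ∃ e, Sol e B := by
    intro B hB
    by_contra h
    push_neg at h
    exact absurd (hleast B h) (not_le.2 hB)
  refine ⟨hlam0, ?_⟩
  by_contra hcof
  have hcoflt : lam.ord.cof < lam := lt_of_not_ge hcof
  obtain ⟨A, hA, hAno⟩ := hwit
  have hAeq : Cardinal.mk ↥A = Cardinal.mk lam.ord.ToType := by
    rw [hA, Cardinal.mk_ord_toType]
  obtain ⟨f⟩ := Cardinal.eq.mp hAeq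
  haveI : IsWellOrder lam.ord.ToType (· < ·) := isWellOrder_lt
  have htype : Ordinal.type (α := lam.ord.ToType) (· < ·) = lam.ord := Ordinal.type_toType _
  obtain ⟨S, hSunb, hScard⟩ := Order.exists_cof_eq lam.ord.ToType
  rw [Ordinal.cof_toType] at hScard
  set AF : S → Set M := fun s => {m | ∃ h : m ∈ A, f ⟨m, h⟩ ≤ s.1} with hAF
  have hAcover : A ⊆ ⋃ s, AF s := by
    intro m hm
    obtain ⟨b, hbS, hb⟩ := hSunb (f ⟨m, hm⟩)
    exact Set.mem_iUnion.2 ⟨⟨b, hbS⟩, hm, hb⟩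
  have hAFcard : ∀ s : S, Cardinal.mk ↥(AF s) < lam := by
    intro s
    have hinj : Cardinal.mk ↥(AF s) ≤ Cardinal.mk ↥(Set.Iic s.1) := by
      refine Cardinal.mk_le_of_injective
        (f := fun m => (⟨f ⟨m.1, m.2.choose⟩, m.2.choose_spec⟩ : ↥(Set.Iic s.1))) ?_
      intro a b hab
      have h2 := f.injective (Subtype.ext_iff.mp hab)
      have h3 := congrArg Subtype.val h2
      exact Subtype.ext h3
    have hIic : Cardinal.mk ↥(Set.Iic s.1) < lam := by
      have hins : (Set.Iic s.1 : Set lam.ord.ToType) = insert s.1 (Set.Iio s.1) := by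
        ext x; simp [le_iff_lt_or_eq, or_comm]
      rw [hins]
      have h1 : Cardinal.mk ↥(Set.Iio s.1) < lam := Cardinal.mk_Iio_ord_toType s.1
      calc Cardinal.mk ↥(insert s.1 (Set.Iio s.1)) ≤ Cardinal.mk ↥(Set.Iio s.1) + 1 :=
            Cardinal.mk_insert_le
        _ < lam := Cardinal.add_lt_of_lt hlam0 h1
            (lt_of_lt_of_le Cardinal.one_lt_aleph0 hlam0)
    exact hinj.trans_lt hIic
  choose eF heF using fun s => hsmall (AF s) (hAFcard s)
  have hUcard : Cardinal.mk ↥(⋃ s, eF s) < lam := by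
    have h1 : Cardinal.mk ↥(⋃ s, eF s) ≤ Cardinal.mk S * θ := by
      refine (Cardinal.mk_iUnion_le _).trans ?_
      exact mul_le_mul_right (ciSup_le' fun s => hcard _ _ (heF s)) _
    refine h1.trans_lt ?_
    calc Cardinal.mk S * θ ≤ max (max (Cardinal.mk S) θ) Cardinal.aleph0 :=
          Cardinal.mul_le_max _ _
      _ < lam := by
          rw [max_lt_iff, max_lt_iff]
          exact ⟨⟨hScard ▸ hcoflt, hlθ⟩, hθ.trans_lt hlθ⟩
  obtain ⟨e, he⟩ := hsmall _ hUcard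
  have hSolA : Sol e (⋃ s, AF s) := htrans S eF AF e heF he
  exact hAno e (hmono e _ A hSolA hAcover)
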